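/- Let {a_1, …, a_{L_1}} be a polyphase Golay sequence set of length M and {b_1, …, b_{L_2}} a polyphase Golay sequence set of length N. For 1 ≤ i ≤ L_1 and 1 ≤ j ≤ L_2 define the M×N matrix C_{ij} = a_i·b_j^T, i.e., C_{ij}[m,n] = a_i[m]·b_j[n]. Then the collection {C_{ij} : 1 ≤ i ≤ L_1, 1 ≤ j ≤ L_2} of L_1·L_2 matrices is a polyphase GCM set of size M×N. -/

import Mathlib

open scoped BigOperators

/-- Aperiodic autocorrelation of a complex sequence (indexed by ℤ). -/
noncomputable def seqAutocorr (a : ℤ → ℂ) (δ : ℤ) : ℂ :=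
  ∑ᶠ i : ℤ, a i * (starRingEnd ℂ) (a (i - δ))

/-- Weight of a sequence. -/
noncomputable def seqWeight (a : ℤ → ℂ) : ℝ :=
  ∑ᶠ i : ℤ, ‖a i‖ ^ 2

/-- Index lies in `[0, L)`. -/
def seqInBox (L : ℕ) (i : ℤ) : Prop := 0 ≤ i ∧ i < (L : ℤ)

/-- A polyphase sequence of length `L`: zero outside `[0, L)` and all entries inside
are `N`-th roots of unity for some `N`. -/
def seqPolyphase (L : ℕ) (a : ℤ → ℂ) : Prop :=
  (∀ i, ¬ seqInBox L i → a i = 0) ∧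
    ∃ N : ℕ, 0 < N ∧ ∀ i, seqInBox L i → a i ^ N = 1

/-- Aperiodic autocorrelation of a complex matrix (indexed by ℤ × ℤ). -/
noncomputable def matAutocorr (A : ℤ → ℤ → ℂ) (δ₁ δ₂ : ℤ) : ℂ :=
  ∑ᶠ (i : ℤ) (j : ℤ), A i j * (starRingEnd ℂ) (A (i - δ₁) (j - δ₂))

/-- Weight of a matrix. -/
noncomputable def matWeight (A : ℤ → ℤ → ℂ) : ℝ :=
  ∑ᶠ (i : ℤ) (j : ℤ), ‖A i j‖ ^ 2

/-- Index pair lies in `[0, m) × [0, n)`. -/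
def matInBox (m n : ℕ) (i j : ℤ) : Prop :=
  0 ≤ i ∧ i < (m : ℤ) ∧ 0 ≤ j ∧ j < (n : ℤ)

/-- A polyphase matrix of size `m × n`. -/
def matPolyphase (m n : ℕ) (A : ℤ → ℤ → ℂ) : Prop :=
  (∀ i j, ¬ matInBox m n i j → A i j = 0) ∧
    ∃ N : ℕ, 0 < N ∧ ∀ i j, matInBox m n i j → A i j ^ N = 1

section Aux

lemma supp_finite {L : ℕ} {a : ℤ → ℂ} (h0 : ∀ i, ¬ seqInBox L i → a i = 0)
    (f : ℤ → ℂ) :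
    (Function.support (fun i => a i * f i)).Finite := by
  apply (Set.finite_Ico (0 : ℤ) (L : ℤ)).subset
  intro i hi
  simp only [Function.mem_support] at hi
  by_contra hbox
  exact hi (by rw [h0 i (fun hb => hbox ⟨hb.1, hb.2⟩), zero_mul])

lemma supp_finite_r {L : ℕ} {a : ℤ → ℂ} (h0 : ∀ i, ¬ seqInBox L i → a i = 0) :
    (Function.support (fun i => ‖a i‖ ^ 2)).Finite := by
  apply (Set.finite_Ico (0 : ℤ) (L : ℤ)).subset
  intro i hi
  simp only [Function.mem_support] at hi
  by_contra hbox
  exact hi (by rw [h0 i (fun hb => hbox ⟨hb.1, hb.2⟩)]; simp)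

lemma matAutocorr_tensor {M N : ℕ} {a b : ℤ → ℂ}
    (ha : ∀ i, ¬ seqInBox M i → a i = 0) (hb : ∀ j, ¬ seqInBox N j → b j = 0)
    (δ₁ δ₂ : ℤ) :
    matAutocorr (fun m n => a m * b n) δ₁ δ₂ = seqAutocorr a δ₁ * seqAutocorr b δ₂ := by
  unfold matAutocorr seqAutocorr
  have hbs := supp_finite hb (fun j => (starRingEnd ℂ) (b (j - δ₂)))
  calc ∑ᶠ (i : ℤ) (j : ℤ), (a i * b j) *
          (starRingEnd ℂ) (a (i - δ₁) * b (j - δ₂))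
      = ∑ᶠ (i : ℤ), (a i * (starRingEnd ℂ) (a (i - δ₁))) *
          ∑ᶠ (j : ℤ), b j * (starRingEnd ℂ) (b (j - δ₂)) := by
        apply finsum_congr; intro i
        rw [mul_finsum _ _]
        apply finsum_congr; intro j
        simp [map_mul]; ring
    _ = _ := by
        rw [finsum_mul _ _]

lemma matWeight_tensor {M N : ℕ} {a b : ℤ → ℂ}
    (ha : ∀ i, ¬ seqInBox M i → a i = 0) (hb : ∀ j, ¬ seqInBox N j → b j = 0) :
    matWeight (fun m n => a m * b n) = seqWeight a * seqWeight b := by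
  unfold matWeight seqWeight
  calc ∑ᶠ (i : ℤ) (j : ℤ), ‖a i * b j‖ ^ 2
      = ∑ᶠ (i : ℤ), ‖a i‖ ^ 2 * ∑ᶠ (j : ℤ), ‖b j‖ ^ 2 := by
        apply finsum_congr; intro i
        rw [mul_finsum _ _]
        apply finsum_congr; intro j
        rw [norm_mul, mul_pow]
    _ = _ := by rw [finsum_mul _ _]

end Aux

/-- from a polyphase Golay sequence set {a₁,…,a_{L₁}} of length M and a
polyphase Golay sequence set {b₁,…,b_{L₂}} of length N, the L₁·L₂ matrices
C_{ij}[m,n] = a_i[m]·b_j[n] form a polyphase GCM set of size M×N. -/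
theorem stmt11 (L₁ L₂ M N : ℕ)
    (a : Fin L₁ → ℤ → ℂ) (b : Fin L₂ → ℤ → ℂ)
    (ha : ∀ i, seqPolyphase M (a i)) (hb : ∀ j, seqPolyphase N (b j))
    (hacomp : ∀ δ : ℤ, ∑ i, seqAutocorr (a i) δ =
      if δ = 0 then ((∑ i, seqWeight (a i) : ℝ) : ℂ) else 0)
    (hbcomp : ∀ δ : ℤ, ∑ j, seqAutocorr (b j) δ =
      if δ = 0 then ((∑ j, seqWeight (b j) : ℝ) : ℂ) else 0)
    (C : Fin L₁ → Fin L₂ → ℤ → ℤ → ℂ)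
    (hC : ∀ i j, C i j = fun m n => a i m * b j n) :
    (∀ i j, matPolyphase M N (C i j)) ∧
      ∀ δ₁ δ₂ : ℤ, ∑ i, ∑ j, matAutocorr (C i j) δ₁ δ₂ =
        if δ₁ = 0 ∧ δ₂ = 0 then ((∑ i, ∑ j, matWeight (C i j) : ℝ) : ℂ) else 0 := by
  constructor
  · intro i j
    obtain ⟨ha0, Na, hNa, haN⟩ := ha i
    obtain ⟨hb0, Nb, hNb, hbN⟩ := hb j
    refine ⟨?_, Na * Nb, Nat.mul_pos hNa hNb, ?_⟩
    · intro m n hbox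
      rw [hC]
      by_cases hm : seqInBox M m
      · have hn : ¬ seqInBox N n := fun hn => hbox ⟨hm.1, hm.2, hn.1, hn.2⟩
        simp [hb0 n hn]
      · simp [ha0 m hm]
    · intro m n hbox
      rw [hC]
      have h1 : a i m ^ Na = 1 := haN m ⟨hbox.1, hbox.2.1⟩
      have h2 : b j n ^ Nb = 1 := hbN n ⟨hbox.2.2.1, hbox.2.2.2⟩
      simp only [mul_pow]
      rw [pow_mul, h1, one_pow, mul_comm Na Nb, pow_mul, h2, one_pow, one_mul]
  · intro δ₁ δ₂
    have key : ∀ i j, matAutocorr (C i j) δ₁ δ₂ =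
        seqAutocorr (a i) δ₁ * seqAutocorr (b j) δ₂ := fun i j => by
      rw [hC]; exact matAutocorr_tensor (ha i).1 (hb j).1 δ₁ δ₂
    have keyw : ∀ i j, matWeight (C i j) = seqWeight (a i) * seqWeight (b j) :=
      fun i j => by rw [hC]; exact matWeight_tensor (ha i).1 (hb j).1
    calc ∑ i, ∑ j, matAutocorr (C i j) δ₁ δ₂
        = (∑ i, seqAutocorr (a i) δ₁) * ∑ j, seqAutocorr (b j) δ₂ := by
          rw [Finset.sum_mul_sum]
          exact Finset.sum_congr rfl fun i _ => Finset.sum_congr rfl fun j _ => key i j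
      _ = _ := by
          rw [hacomp, hbcomp]
          by_cases h1 : δ₁ = 0 <;> by_cases h2 : δ₂ = 0 <;>
            simp only [h1, h2, if_true, if_false, and_true, and_false, false_and,
              if_pos rfl, mul_zero, zero_mul, ite_true, ite_false]
          simp only [keyw]
          rw [← Finset.sum_mul_sum]
          push_cast
          ring
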